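/- Suppose for each m we have random variables S_m, D_m on finite spaces and events E_{s,m} with sup_s P(D_m ∈ E_{s,m}) ≤ α + r_m where r_m → 0, and I(S_m; D_m) ≤ η_m with η_m → 0. Then limsup_m P(D_m ∈ E_{S_m, m}) ≤ α. -/

import Mathlib

open scoped BigOperators
open Filter

/-- A probability vector on a finite space. -/
def IsProbVec {α : Type*} [Fintype α] (p : α → ℝ) : Prop :=
  (∀ x, 0 ≤ p x) ∧ ∑ x, p x = 1

/-- Marginal of the first coordinate. -/
noncomputable def margFst {α β : Type*} [Fintype β] (p : α × β → ℝ) (a : α) : ℝ :=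
  ∑ b, p (a, b)

/-- Marginal of the second coordinate. -/
noncomputable def margSnd {α β : Type*} [Fintype α] (p : α × β → ℝ) (b : β) : ℝ :=
  ∑ a, p (a, b)

/-- Mutual information (in nats). -/
noncomputable def mutInf {α β : Type*} [Fintype α] [Fintype β] (p : α × β → ℝ) : ℝ :=
  ∑ a, ∑ b, p (a, b) * Real.log (p (a, b) / (margFst p a * margSnd p b))


lemma mul_log_div_eq (x y : ℝ) (hy : y ≠ 0) :
    x * Real.log (x / y) = x * Real.log x - x * Real.log y := by
  rcases eq_or_ne x 0 with h | h
  · simp [h]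
  · rw [Real.log_div h hy, mul_sub]

lemma binPinsker_half (a b : ℝ) (ha0 : 0 ≤ a) (hab : a ≤ b) (hb1 : b < 1) :
    2 * (a - b) ^ 2 ≤ a * Real.log (a / b) + (1 - a) * Real.log ((1 - a) / (1 - b)) := by
  rcases eq_or_lt_of_le hab with rfl | hlt
  · have h1 : (1 : ℝ) - a ≠ 0 := by linarith
    rcases eq_or_ne a 0 with rfl | h
    · simp
    · rw [div_self h, div_self h1]; simp
  have hb0 : 0 < b := lt_of_le_of_lt ha0 hlt
  set G : ℝ → ℝ := fun x =>
    a * Real.log a - a * Real.log x +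
      ((1 - a) * Real.log (1 - a) - (1 - a) * Real.log (1 - x)) - 2 * (a - x) ^ 2 with hG
  have hd : ∀ x ∈ Set.Ioo a b, HasDerivAt G ((x - a) * (x⁻¹ * (1 - x)⁻¹ - 4)) x := by
    intro x hx
    have hx0 : 0 < x := lt_of_le_of_lt ha0 hx.1
    have hx1 : x < 1 := hx.2.trans hb1
    have h1 : HasDerivAt (fun x : ℝ => a * Real.log x) (a * x⁻¹) x :=
      (Real.hasDerivAt_log hx0.ne').const_mul a
    have h2 : HasDerivAt (fun x : ℝ => (1 - a) * Real.log (1 - x))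
        ((1 - a) * ((1 - x)⁻¹ * (-1))) x := by
      have hinner : HasDerivAt (fun x : ℝ => 1 - x) (-1) x := by
        simpa using (hasDerivAt_id x).const_sub 1
      exact ((Real.hasDerivAt_log (by linarith)).comp x hinner).const_mul (1 - a)
    have h3 : HasDerivAt (fun x : ℝ => 2 * (a - x) ^ 2)
        (2 * ((2 : ℕ) * (a - x) ^ 1 * (-1))) x := by
      have hinner : HasDerivAt (fun x : ℝ => a - x) (-1) x := by
        simpa using (hasDerivAt_id x).const_sub a
      exact (hinner.pow 2).const_mul 2
    have := (((hasDerivAt_const x (a * Real.log a)).sub h1).add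
      ((hasDerivAt_const x ((1 - a) * Real.log (1 - a))).sub h2)).sub h3
    refine this.congr_deriv ?_
    have hx1' : (1 : ℝ) - x ≠ 0 := by linarith
    linear_combination (a * (1 - x)⁻¹ - (1 - x)⁻¹) * (mul_inv_cancel₀ hx0.ne') +
      a * x⁻¹ * (mul_inv_cancel₀ hx1')
  have hmono : MonotoneOn G (Set.Icc a b) := by
    have hcont : ContinuousOn G (Set.Icc a b) := by
      have hc1 : ContinuousOn (fun x : ℝ => a * Real.log x) (Set.Icc a b) := by
        rcases eq_or_lt_of_le ha0 with rfl | ha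
        · simpa using continuousOn_const
        · exact continuousOn_const.mul (Real.continuousOn_log.mono
            (fun x hx => by simpa using (lt_of_lt_of_le ha hx.1).ne'))
      have hc2 : ContinuousOn (fun x : ℝ => (1 - a) * Real.log (1 - x)) (Set.Icc a b) := by
        refine continuousOn_const.mul (Real.continuousOn_log.comp
          (continuous_const.sub continuous_id).continuousOn ?_)
        intro x hx
        have : x < 1 := lt_of_le_of_lt hx.2 hb1
        simp only [Set.mem_compl_iff, Set.mem_singleton_iff]
        intro h; linarith
      exact ((continuousOn_const.sub hc1).add (continuousOn_const.sub hc2)).sub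
        ((continuous_const.mul ((continuous_const.sub continuous_id).pow 2)).continuousOn)
    refine monotoneOn_of_deriv_nonneg (convex_Icc a b) hcont ?_ ?_
    · intro x hx
      rw [interior_Icc] at hx
      exact (hd x hx).differentiableAt.differentiableWithinAt
    · intro x hx
      rw [interior_Icc] at hx
      rw [(hd x hx).deriv]
      have hx0 : 0 < x := lt_of_le_of_lt ha0 hx.1
      have hx1 : x < 1 := hx.2.trans hb1
      have h4 : 4 ≤ x⁻¹ * (1 - x)⁻¹ := by
        rw [← one_div, ← one_div, div_mul_div_comm]
        rw [le_div_iff₀ (by nlinarith)]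
        nlinarith [sq_nonneg (2 * x - 1)]
      exact mul_nonneg (by linarith [hx.1]) (by linarith)
  have hGa : G a = 0 := by simp [hG]
  have hGb : G a ≤ G b := hmono (Set.left_mem_Icc.2 hab) (Set.right_mem_Icc.2 hab) hab
  rw [hGa] at hGb
  rw [mul_log_div_eq a b hb0.ne', mul_log_div_eq (1 - a) (1 - b) (by linarith)]
  simp only [hG] at hGb
  linarith

lemma binPinsker (a b : ℝ) (ha0 : 0 ≤ a) (ha1 : a ≤ 1) (hb0 : 0 < b) (hb1 : b < 1) :
    2 * (a - b) ^ 2 ≤ a * Real.log (a / b) + (1 - a) * Real.log ((1 - a) / (1 - b)) := by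
  rcases le_or_gt a b with h | h
  · exact binPinsker_half a b ha0 h hb1
  · have := binPinsker_half (1 - a) (1 - b) (by linarith) (by linarith) (by linarith)
    have e1 : (1 : ℝ) - (1 - a) = a := by ring
    have e2 : (1 : ℝ) - (1 - b) = b := by ring
    rw [e1, e2] at this
    nlinarith [this]

lemma logSum {ι : Type*} (s : Finset ι) (p q : ι → ℝ)
    (hp : ∀ i ∈ s, 0 ≤ p i) (hq : ∀ i ∈ s, 0 ≤ q i)
    (h0 : ∀ i ∈ s, q i = 0 → p i = 0) :
    (∑ i ∈ s, p i) * Real.log ((∑ i ∈ s, p i) / (∑ i ∈ s, q i)) ≤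
      ∑ i ∈ s, p i * Real.log (p i / q i) := by
  set a := ∑ i ∈ s, p i with ha
  set b := ∑ i ∈ s, q i with hb
  rcases eq_or_lt_of_le (Finset.sum_nonneg hp) with h | hapos
  · -- a = 0, all p i = 0
    have hz : ∀ i ∈ s, p i = 0 := by
      intro i hi
      exact (Finset.sum_eq_zero_iff_of_nonneg hp).1 h.symm i hi
    have haz : (∑ i ∈ s, p i) = 0 := h.symm
    rw [ha, haz, zero_mul]
    refine Finset.sum_nonneg fun i hi => ?_
    rw [hz i hi, zero_mul]
  · -- a > 0 ⇒ some p i > 0 ⇒ b > 0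
    have hbpos : 0 < b := by
      obtain ⟨i, hi, hpi⟩ : ∃ i ∈ s, 0 < p i := by
        by_contra hcon
        push_neg at hcon
        have : a ≤ 0 := Finset.sum_nonpos fun i hi => hcon i hi
        linarith
      have hqi : 0 < q i := by
        rcases eq_or_lt_of_le (hq i hi) with h' | h'
        · exact absurd (h0 i hi h'.symm) (by linarith)
        · exact h'
      exact lt_of_lt_of_le hqi (Finset.single_le_sum hq hi)
    have key : ∀ i ∈ s, p i * Real.log (a / b) + (p i - q i * (a / b))
        ≤ p i * Real.log (p i / q i) := by
      intro i hi
      rcases eq_or_lt_of_le (hp i hi) with h' | h'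
      · rw [← h']
        simp only [zero_mul, zero_sub, zero_add]
        have : 0 ≤ q i * (a / b) := mul_nonneg (hq i hi) (le_of_lt (div_pos hapos hbpos))
        linarith
      · have hqi : 0 < q i := by
          rcases eq_or_lt_of_le (hq i hi) with h'' | h''
          · exact absurd (h0 i hi h''.symm) (by linarith)
          · exact h''
        have haa : (0 : ℝ) < a := hapos
        have hlog : Real.log (p i / q i) =
            Real.log ((p i * b) / (q i * a)) + Real.log (a / b) := by
          have e : p i / q i = (p i * b) / (q i * a) * (a / b) := by
            field_simp
          have h1 : (0 : ℝ) < p i * b / (q i * a) := by positivity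
          have h2 : (0 : ℝ) < a / b := by positivity
          rw [e, Real.log_mul h1.ne' h2.ne']
        have hineq : 1 - (q i * a) / (p i * b) ≤ Real.log ((p i * b) / (q i * a)) := by
          have h1 : 0 < (q i * a) / (p i * b) := by positivity
          have := Real.log_le_sub_one_of_pos h1
          rw [Real.log_div (by positivity) (by positivity)] at this ⊢
          linarith
        rw [hlog, mul_add]
        have h2 : p i * (1 - (q i * a) / (p i * b)) ≤
            p i * Real.log ((p i * b) / (q i * a)) :=
          mul_le_mul_of_nonneg_left hineq (le_of_lt h')
        have h3 : p i * (1 - (q i * a) / (p i * b)) = p i - q i * (a / b) := by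
          field_simp
        linarith
    calc a * Real.log (a / b) = ∑ i ∈ s, (p i * Real.log (a / b) + (p i - q i * (a / b))) := by
          rw [Finset.sum_add_distrib, ← Finset.sum_mul, Finset.sum_sub_distrib,
            ← Finset.sum_mul, ← ha, ← hb]
          field_simp
          ring
      _ ≤ _ := Finset.sum_le_sum key

lemma kl_event {ι : Type*} [Fintype ι] (p q : ι → ℝ)
    (hp0 : ∀ i, 0 ≤ p i) (hp1 : ∑ i, p i = 1)
    (hq0 : ∀ i, 0 ≤ q i) (hq1 : ∑ i, q i = 1)
    (h0 : ∀ i, q i = 0 → p i = 0) (A : Finset ι) :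
    2 * ((∑ i ∈ A, p i) - (∑ i ∈ A, q i)) ^ 2 ≤ ∑ i, p i * Real.log (p i / q i) := by
  classical
  set a := ∑ i ∈ A, p i with ha
  set b := ∑ i ∈ A, q i with hb
  have hsplit : ∀ f : ι → ℝ, (∑ i ∈ A, f i) + (∑ i ∈ Aᶜ, f i) = ∑ i, f i :=
    fun f => Finset.sum_add_sum_compl A f
  have hac : ∑ i ∈ Aᶜ, p i = 1 - a := by
    have := hsplit p; rw [hp1] at this; linarith
  have hbc : ∑ i ∈ Aᶜ, q i = 1 - b := by
    have := hsplit q; rw [hq1] at this; linarith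
  have hL1 := logSum A p q (fun i _ => hp0 i) (fun i _ => hq0 i) (fun i _ => h0 i)
  have hL2 := logSum Aᶜ p q (fun i _ => hp0 i) (fun i _ => hq0 i) (fun i _ => h0 i)
  rw [hac, hbc] at hL2
  have hKL : a * Real.log (a / b) + (1 - a) * Real.log ((1 - a) / (1 - b)) ≤
      ∑ i, p i * Real.log (p i / q i) := by
    rw [← hsplit (fun i => p i * Real.log (p i / q i))]
    exact add_le_add hL1 hL2
  have ha0 : 0 ≤ a := Finset.sum_nonneg fun i _ => hp0 i
  have ha1 : a ≤ 1 := by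
    have : 0 ≤ (1 : ℝ) - a := by rw [← hac]; exact Finset.sum_nonneg fun i _ => hp0 i
    linarith
  have hb0 : 0 ≤ b := Finset.sum_nonneg fun i _ => hq0 i
  have hb1 : b ≤ 1 := by
    have : 0 ≤ (1 : ℝ) - b := by rw [← hbc]; exact Finset.sum_nonneg fun i _ => hq0 i
    linarith
  rcases eq_or_lt_of_le hb0 with h | h
  · -- b = 0 ⇒ a = 0
    have haz : a = 0 := by
      have hz : ∀ i ∈ A, q i = 0 := (Finset.sum_eq_zero_iff_of_nonneg
        (fun i _ => hq0 i)).1 h.symm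
      exact Finset.sum_eq_zero fun i hi => h0 i (hz i hi)
    rw [haz, ← h]
    simpa [haz, show b = 0 from h.symm] using hKL
  rcases eq_or_lt_of_le hb1 with h1 | h1
  · -- b = 1 ⇒ a = 1
    have haz : a = 1 := by
      have hz : ∀ i ∈ Aᶜ, q i = 0 := (Finset.sum_eq_zero_iff_of_nonneg
        (fun i _ => hq0 i)).1 (by rw [hbc, ← h1]; ring)
      have : ∑ i ∈ Aᶜ, p i = 0 := Finset.sum_eq_zero fun i hi => h0 i (hz i hi)
      rw [hac] at this; linarith
    rw [haz, h1]
    simpa [haz, h1] using hKL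
  exact le_trans (binPinsker a b ha0 ha1 h h1) hKL

/-- Event sum -/
lemma sum_event {α β : Type*} [Fintype α] [Fintype β] [DecidableEq β]
    (E : α → Finset β) (f : α × β → ℝ) :
    ∑ x ∈ Finset.univ.filter (fun x : α × β => x.2 ∈ E x.1), f x
      = ∑ a, ∑ b ∈ E a, f (a, b) := by
  rw [Finset.sum_filter, Fintype.sum_prod_type]
  exact Finset.sum_congr rfl fun a _ => by
    simp [Finset.sum_ite_mem]

/-- finite-sample bound -/
lemma finite_sample {α β : Type*} [Fintype α] [Fintype β]
    (p : α × β → ℝ) (hp : IsProbVec p) (E : α → Finset β) (c : ℝ)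
    (hcov : ∀ s : α, ∑ d ∈ E s, margSnd p d ≤ c) (η : ℝ) (hmi : mutInf p ≤ η) :
    ∑ s, ∑ d ∈ E s, p (s, d) ≤ c + Real.sqrt (η / 2) := by
  classical
  set q : α × β → ℝ := fun x => margFst p x.1 * margSnd p x.2 with hq
  set A : Finset (α × β) := Finset.univ.filter (fun x : α × β => x.2 ∈ E x.1) with hA
  have hp0 := hp.1
  have hp1 : ∑ x : α × β, p x = 1 := hp.2
  have hm1 : ∀ a, 0 ≤ margFst p a := fun a => Finset.sum_nonneg fun b _ => hp0 _
  have hm2 : ∀ b, 0 ≤ margSnd p b := fun b => Finset.sum_nonneg fun a _ => hp0 _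
  have hq0 : ∀ x, 0 ≤ q x := fun x => mul_nonneg (hm1 _) (hm2 _)
  have hs1 : ∑ a, margFst p a = 1 := by
    rw [← hp1, Fintype.sum_prod_type]; rfl
  have hs2 : ∑ b, margSnd p b = 1 := by
    rw [← hp1, Fintype.sum_prod_type_right]; rfl
  have hq1 : ∑ x : α × β, q x = 1 := by
    calc ∑ x : α × β, q x = ∑ a, ∑ b, margFst p a * margSnd p b :=
          Fintype.sum_prod_type _
      _ = ∑ a, margFst p a * ∑ b, margSnd p b := by
          refine Finset.sum_congr rfl fun a _ => ?_
          rw [Finset.mul_sum]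
      _ = 1 := by
          rw [Finset.sum_congr rfl fun a (_ : a ∈ Finset.univ) => by rw [hs2, mul_one]]
          exact hs1
  have h0 : ∀ x, q x = 0 → p x = 0 := by
    rintro ⟨s, d⟩ hx
    rcases mul_eq_zero.1 hx with h | h
    · have hle : p (s, d) ≤ margFst p s := Finset.single_le_sum
        (fun b (_ : b ∈ Finset.univ) => hp0 (s, b)) (Finset.mem_univ d)
      have := hp0 (s, d); rw [h] at hle; linarith
    · have hle : p (s, d) ≤ margSnd p d := Finset.single_le_sum
        (fun a (_ : a ∈ Finset.univ) => hp0 (a, d)) (Finset.mem_univ s)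
      have := hp0 (s, d); rw [h] at hle; linarith
  have hKL := kl_event p q hp0 hp1 hq0 hq1 h0 A
  have hmut : ∑ x : α × β, p x * Real.log (p x / q x) = mutInf p := by
    rw [mutInf, Fintype.sum_prod_type]
  rw [hmut] at hKL
  set a := ∑ x ∈ A, p x with ha
  set b := ∑ x ∈ A, q x with hb
  have haf : a = ∑ s, ∑ d ∈ E s, p (s, d) := by rw [ha, hA, sum_event]
  have hbf : b ≤ c := by
    rw [hb, hA, sum_event]
    calc ∑ s, ∑ d ∈ E s, q (s, d)
        = ∑ s, margFst p s * ∑ d ∈ E s, margSnd p d := by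
          refine Finset.sum_congr rfl fun s _ => ?_
          rw [Finset.mul_sum]
      _ ≤ ∑ s, margFst p s * c := Finset.sum_le_sum fun s _ =>
          mul_le_mul_of_nonneg_left (hcov s) (hm1 s)
      _ = c := by rw [← Finset.sum_mul, hs1, one_mul]
  have hsq : (a - b) ^ 2 ≤ η / 2 := by nlinarith [le_trans hKL hmi]
  have habs : a - b ≤ Real.sqrt (η / 2) := by
    calc a - b ≤ |a - b| := le_abs_self _
      _ = Real.sqrt ((a - b) ^ 2) := (Real.sqrt_sq_eq_abs _).symm
      _ ≤ Real.sqrt (η / 2) := Real.sqrt_le_sqrt hsq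
  rw [← haf]
  linarith

theorem asymptotic_selected_validity
    (𝒮 𝒟 : ℕ → Type*) [∀ m, Fintype (𝒮 m)] [∀ m, Fintype (𝒟 m)]
    (p : ∀ m, 𝒮 m × 𝒟 m → ℝ) (hp : ∀ m, IsProbVec (p m))
    (E : ∀ m, 𝒮 m → Finset (𝒟 m)) (α : ℝ) (r η : ℕ → ℝ)
    (hcov : ∀ m, ∀ s : 𝒮 m, ∑ d ∈ E m s, margSnd (p m) d ≤ α + r m)
    (hr : Tendsto r atTop (nhds 0))
    (hmi : ∀ m, mutInf (p m) ≤ η m)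
    (hη : Tendsto η atTop (nhds 0)) :
    limsup (fun m => ∑ s, ∑ d ∈ E m s, p m (s, d)) atTop ≤ α := by
  set f : ℕ → ℝ := fun m => ∑ s, ∑ d ∈ E m s, p m (s, d) with hf
  set u : ℕ → ℝ := fun m => α + r m + Real.sqrt (η m / 2) with hu
  have key : ∀ m, f m ≤ u m := fun m =>
    finite_sample (p m) (hp m) (E m) (α + r m) (hcov m) (η m) (hmi m)
  have hsq : Tendsto (fun m => Real.sqrt (η m / 2)) atTop (nhds 0) := by
    have h2 : Tendsto (fun m => η m / 2) atTop (nhds 0) := by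
      simpa using hη.div_const 2
    have h3 := (Real.continuous_sqrt.tendsto 0).comp h2
    simpa only [Function.comp_def, Real.sqrt_zero] using h3
  have hul : Tendsto u atTop (nhds α) := by
    have h4 := ((tendsto_const_nhds (x := α) (f := atTop)).add hr).add hsq
    rw [add_zero, add_zero] at h4
    exact h4
  have hf0 : ∀ m, 0 ≤ f m := fun m =>
    Finset.sum_nonneg fun s _ => Finset.sum_nonneg fun d _ => (hp m).1 _
  calc limsup f atTop ≤ limsup u atTop := by
        refine limsup_le_limsup (Eventually.of_forall key) ?_ ?_
        · exact isCoboundedUnder_le_of_le atTop hf0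
        · exact hul.isBoundedUnder_le
    _ = α := hul.limsup_eq
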